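/- For every nonzero y ∈ K, the fractional ideal yM of D is a b-ideal: (yM)^b = yM, i.e., ⋂_V (yM)V = yM, where the intersection runs over all valuation overrings V of D. -/

import Mathlib

set_option maxHeartbeats 1000000
set_option synthInstance.maxHeartbeats 1000000


open MvPolynomial FractionalIdeal

noncomputable section

variable (k : Type*) [Field k]

/-- The ideal `N = (X_1, X_2, ...)` of `R = k[X_1, X_2, ...]` generated by all the
indeterminates. -/
def bigN : Ideal (MvPolynomial ℕ k) := Ideal.span (Set.range MvPolynomial.X)

theorem bigN_eq_ker : bigN k = RingHom.ker (constantCoeff (σ := ℕ) (R := k)) := by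
  ext p
  rw [bigN, ← Set.image_univ, mem_ideal_span_X_image, RingHom.mem_ker]
  constructor
  · intro h
    rw [constantCoeff_eq]
    by_contra hc
    obtain ⟨i, _, hi⟩ := h 0 (mem_support_iff.mpr hc)
    simp at hi
  · intro h m hm
    rw [constantCoeff_eq] at h
    have hm0 : m ≠ 0 := by rintro rfl; exact mem_support_iff.mp hm h
    obtain ⟨i, hi⟩ := Finsupp.ne_iff.mp hm0
    exact ⟨i, trivial, by simpa using hi⟩

instance : (bigN k).IsMaximal := by
  rw [bigN_eq_ker]
  exact RingHom.ker_isMaximal_of_surjective _ (fun a => ⟨C a, by simp⟩)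

/-- `D`, the localization of `k[X_1, X_2, ...]` at the maximal ideal `N`. -/
abbrev bigD := Localization.AtPrime (bigN k)

/-- `K`, the fraction field of `D`. -/
abbrev bigK := FractionRing (bigD k)

/-- `M`, the maximal ideal of the local domain `D`. -/
def bigM : Ideal (bigD k) := IsLocalRing.maximalIdeal (bigD k)

open Pointwise

attribute [local instance 2000] Algebra.toModule

/-- The maximal ideal `M` of `D`, viewed as a fractional ideal of `D`. -/
def bigMF : FractionalIdeal (nonZeroDivisors (bigD k)) (bigK k) :=
  ((bigM k : Ideal (bigD k)) : FractionalIdeal (nonZeroDivisors (bigD k)) (bigK k))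

/-- The `b`-operation: `E^b = ⋂ EV`, the intersection over all valuation overrings `V` of `D`
of the `V`-submodule of `K` generated by `E` (viewed as a `D`-submodule of `K`). -/
def bOp (E : Submodule (bigD k) (bigK k)) : Submodule (bigD k) (bigK k) :=
  sInf {J | ∃ V : ValuationSubring (bigK k),
    (∀ d : bigD k, algebraMap (bigD k) (bigK k) d ∈ V) ∧
    J = Submodule.span (bigD k) ((E : Set (bigK k)) * (V : Set (bigK k)))}

/-- The set `𝒮` of all fractional ideals of `D` of the form `xF^b` (with `x ∈ K` nonzero and
`F` a finitely generated nonzero fractional ideal of `D`) or `yM` (with `y ∈ K` nonzero),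
viewed as `D`-submodules of `K`. -/
def Sset : Set (Submodule (bigD k) (bigK k)) :=
  {J | (∃ x : bigK k, x ≠ 0 ∧
          ∃ F : FractionalIdeal (nonZeroDivisors (bigD k)) (bigK k), F ≠ 0 ∧
            (F : Submodule (bigD k) (bigK k)).FG ∧
            J = Submodule.span (bigD k) {x} * bOp k (F : Submodule (bigD k) (bigK k))) ∨
       (∃ y : bigK k, y ≠ 0 ∧
          J = Submodule.span (bigD k) {y} * (bigMF k : Submodule (bigD k) (bigK k)))}

/-- The operation `E^⋆ := ⋂ {J ∈ 𝒮 : E ⊆ J}`. -/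
def starS (E : Submodule (bigD k) (bigK k)) : Submodule (bigD k) (bigK k) :=
  sInf {J | J ∈ Sset k ∧ E ≤ J}

lemma aux_int {R K : Type*} [CommRing R] [Field K] [Algebra R K] {x : K} (hx0 : x ≠ 0)
    (h : x ∈ Algebra.adjoin R {x⁻¹}) : IsIntegral R x := by
  rw [Algebra.adjoin_singleton_eq_range_aeval] at h
  obtain ⟨p, hp⟩ := h
  have hp' : Polynomial.aeval x⁻¹ p = x := hp
  set n := p.natDegree with hn
  set N : Submodule R K := Submodule.span R ((x ^ ·) '' Set.Iic n) with hN
  have hxn1 : x ^ (n + 1) ∈ N := by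
    have key : x ^ (n + 1) = ∑ i ∈ Finset.range (n + 1), p.coeff i • x ^ (n - i) := by
      calc x ^ (n + 1) = x ^ n * Polynomial.aeval x⁻¹ p := by rw [hp']; ring
        _ = ∑ i ∈ Finset.range (n + 1), p.coeff i • (x ^ n * (x⁻¹) ^ i) := by
            rw [Polynomial.aeval_eq_sum_range, Finset.mul_sum]
            exact Finset.sum_congr rfl fun i _ => (mul_smul_comm _ _ _)
        _ = ∑ i ∈ Finset.range (n + 1), p.coeff i • x ^ (n - i) := by
            refine Finset.sum_congr rfl fun i hi => ?_
            rw [Finset.mem_range, Nat.lt_succ_iff] at hi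
            rw [pow_sub₀ x hx0 hi, inv_pow]
    rw [key]
    exact N.sum_mem fun i _ => N.smul_mem _
      (Submodule.subset_span ⟨n - i, Nat.sub_le n i, rfl⟩)
  refine isIntegral_of_smul_mem_submodule N ?_ ?_ x ?_
  · intro hbot
    have h1 : (1 : K) ∈ N := Submodule.subset_span ⟨0, Set.mem_Iic.mpr (Nat.zero_le n), pow_zero x⟩
    rw [hbot] at h1
    simpa using h1
  · exact Submodule.fg_span ((Set.finite_Iic n).image _)
  · intro m hm
    induction hm using Submodule.span_induction with
    | mem t ht =>
        obtain ⟨j, hj, rfl⟩ := ht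
        rcases eq_or_lt_of_le (Set.mem_Iic.mp hj) with rfl | hjn
        · rw [smul_eq_mul, ← pow_succ']
          exact hxn1
        · rw [smul_eq_mul, ← pow_succ']
          exact Submodule.subset_span ⟨j + 1, hjn, rfl⟩
    | zero => simpa using N.zero_mem
    | add a b _ _ ha hb => rw [smul_add]; exact N.add_mem ha hb
    | smul r a _ ha => rw [smul_comm]; exact N.smul_mem r ha


instance aux_iic : IsIntegrallyClosed (bigD k) := by
  have h : (bigN k).primeCompl ≤ nonZeroDivisors (MvPolynomial ℕ k) := by
    intro a ha
    exact mem_nonZeroDivisors_of_ne_zero (fun h0 => ha (h0 ▸ (bigN k).zero_mem))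
  exact isIntegrallyClosed_of_isLocalization (S := bigD k) (R := MvPolynomial ℕ k) _ h

lemma aux_exists {R K : Type*} [CommRing R] [IsDomain R] [Field K] [Algebra R K]
    [IsFractionRing R K] [IsIntegrallyClosed R] {x : K}
    (hx : x ∉ Set.range (algebraMap R K)) :
    ∃ V : ValuationSubring K, (∀ d, algebraMap R K d ∈ V) ∧ x ∉ V := by
  have hx0 : x ≠ 0 := fun h => hx ⟨0, by simp [h]⟩
  set t := x⁻¹ with ht
  set S := Algebra.adjoin R {t} with hS
  have htS : t ∈ S.toSubring := Algebra.subset_adjoin rfl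
  have hxS : x ∉ S.toSubring := by
    intro h
    have hint : IsIntegral R x := aux_int hx0 h
    obtain ⟨d, hd⟩ := IsIntegrallyClosed.isIntegral_iff.mp hint
    exact hx ⟨d, hd⟩
  have hnu : ¬IsUnit (⟨t, htS⟩ : S.toSubring) := by
    intro hu
    obtain ⟨w, hw⟩ := isUnit_iff_exists_inv.mp hu
    have hw1 : t * (w : K) = 1 := congrArg Subtype.val hw
    have : (w : K) = x := by
      calc (w : K) = x * (t * w) := by rw [ht, ← mul_assoc, mul_inv_cancel₀ hx0, one_mul]
        _ = x := by rw [hw1, mul_one]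
    exact hxS (this ▸ w.2)
  obtain ⟨P, hPmax, htP⟩ := exists_max_ideal_of_mem_nonunits (mem_nonunits_iff.mpr hnu)
  haveI := hPmax.isPrime
  obtain ⟨V, hV⟩ := (LocalSubring.ofPrime S.toSubring P).exists_le_valuationSubring
  have hSV : S.toSubring ≤ V.toSubring := (LocalSubring.le_ofPrime S.toSubring P).trans hV.1
  refine ⟨V, fun d => hSV (S.algebraMap_mem d), fun hxV => ?_⟩
  have hτ : ¬IsUnit (algebraMap S.toSubring (LocalSubring.ofPrime S.toSubring P).toSubring
      ⟨t, htS⟩) := by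
    rw [IsLocalization.AtPrime.isUnit_to_map_iff
      (LocalSubring.ofPrime S.toSubring P).toSubring P]
    exact fun hc => hc htP
  apply hτ
  have hVunit : IsUnit (⟨t, hSV htS⟩ : V.toSubring) := by
    refine isUnit_iff_exists_inv.mpr ⟨⟨x, hxV⟩, Subtype.ext ?_⟩
    simpa [ht] using inv_mul_cancel₀ hx0
  obtain ⟨hle, hloc⟩ := hV
  exact hloc.1 _ hVunit


/-- For every nonzero `y ∈ K`, the fractional ideal `yM` of `D` is a `b`-ideal:
`(yM)^b = yM`. -/
theorem bOp_yM (y : bigK k) (hy : y ≠ 0) :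
    bOp k (Submodule.span (bigD k) {y} * (bigMF k : Submodule (bigD k) (bigK k))) =
      Submodule.span (bigD k) {y} * (bigMF k : Submodule (bigD k) (bigK k)) := by
  set E := Submodule.span (bigD k) {y} * (bigMF k : Submodule (bigD k) (bigK k)) with hE
  apply le_antisymm
  · -- hard direction
    intro z hz
    rw [bOp, Submodule.mem_sInf] at hz
    obtain ⟨V₀, hmem₀, hloc₀⟩ :=
      IsLocalRing.exists_factor_valuationRing (algebraMap (bigD k) (bigK k))
    set v := V₀.valuation with hv
    have hvy : v y ≠ 0 := (Valuation.ne_zero_iff v).mpr hy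
    have hval_le : ∀ d : bigD k, v (algebraMap (bigD k) (bigK k) d) ≤ 1 := fun d =>
      (ValuationSubring.valuation_le_one_iff V₀ _).mpr (hmem₀ d)
    -- elements of E have valuation < v y
    have hEval : ∀ e ∈ E, v e < v y := by
      intro e he
      refine Submodule.mul_induction_on he ?_ ?_
      · intro p hp q hq
        obtain ⟨d, hd⟩ := Submodule.mem_span_singleton.mp hp
        obtain ⟨m, hm, hq'⟩ := (mem_coeIdeal _).mp (mem_coe.mp hq)
        have hp_le : v p ≤ v y := by
          rw [← hd, Algebra.smul_def, v.map_mul]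
          calc v (algebraMap (bigD k) (bigK k) d) * v y ≤ 1 * v y :=
                mul_le_mul_left (hval_le d) _
          _ = v y := one_mul _
        have hq_lt : v q < 1 := by
          have hmu : ¬IsUnit ((algebraMap (bigD k) (bigK k)).codRestrict
              V₀.toSubring hmem₀ m) := by
            intro hu
            have := hloc₀.1 m hu
            rw [bigM] at hm
            exact (IsLocalRing.mem_maximalIdeal m).mp hm this
          have hcoe : algebraMap (bigD k) (bigK k) m ∈ V₀.nonunits := by
            rw [ValuationSubring.mem_nonunits_iff_exists_mem_maximalIdeal]
            exact ⟨hmem₀ m, (IsLocalRing.mem_maximalIdeal _).mpr (mem_nonunits_iff.mpr hmu)⟩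
          rw [← hq']
          exact (ValuationSubring.mem_nonunits_iff V₀).mp hcoe
        calc v (p * q) = v p * v q := v.map_mul p q
          _ < v y * 1 := (mul_le_mul_of_nonneg_right hp_le zero_le').trans_lt (mul_lt_mul_of_pos_left hq_lt (zero_lt_iff.mpr hvy))
          _ = v y := mul_one _
      · intro a b ha hb
        calc v (a + b) ≤ max (v a) (v b) := v.map_add a b
          _ < v y := max_lt ha hb
    -- z has valuation < v y
    have hzval : v z < v y := by
      have hz₀ : z ∈ Submodule.span (bigD k) ((E : Set (bigK k)) * (V₀ : Set (bigK k))) :=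
        hz _ ⟨V₀, hmem₀, rfl⟩
      have hsub : Submodule.span (bigD k) ((E : Set (bigK k)) * (V₀ : Set (bigK k))) ≤
          ({ carrier := {t | v t < v y}
             add_mem' := fun {a b} ha hb => lt_of_le_of_lt (v.map_add a b) (max_lt ha hb)
             zero_mem' := by
               show v 0 < v y
               rw [v.map_zero]
               exact lt_of_le_of_ne zero_le' (Ne.symm hvy)
             smul_mem' := by
               intro d t ht
               rw [Set.mem_setOf_eq]
               rw [Algebra.smul_def, v.map_mul]
               calc v (algebraMap (bigD k) (bigK k) d) * v t ≤ 1 * v t :=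
                     mul_le_mul_left (hval_le d) _
                 _ = v t := one_mul _
                 _ < v y := ht } : Submodule (bigD k) (bigK k)) := by
        rw [Submodule.span_le]
        rintro _ ⟨e, he, u, hu, rfl⟩
        show v (e * u) < v y
        rw [v.map_mul]
        calc v e * v u ≤ v e * 1 :=
              mul_le_mul_right ((ValuationSubring.valuation_le_one_iff V₀ u).mpr hu) _
          _ = v e := mul_one _
          _ < v y := hEval e he
      exact hsub hz₀
    -- y⁻¹ * z lies in every valuation overring
    have hw : ∀ V : ValuationSubring (bigK k),
        (∀ d, algebraMap (bigD k) (bigK k) d ∈ V) → y⁻¹ * z ∈ V := by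
      intro V hVd
      have hEJ : ∀ e ∈ E, y⁻¹ * e ∈ V := by
        intro e he
        refine Submodule.mul_induction_on he ?_ ?_
        · intro p hp q hq
          obtain ⟨d, hd⟩ := Submodule.mem_span_singleton.mp hp
          obtain ⟨m, _, hq'⟩ := (mem_coeIdeal _).mp (mem_coe.mp hq)
          have heq : y⁻¹ * (p * q) =
              algebraMap (bigD k) (bigK k) d * algebraMap (bigD k) (bigK k) m := by
            rw [← hd, ← hq', Algebra.smul_def]
            field_simp
          rw [heq]
          exact V.mul_mem _ _ (hVd d) (hVd m)
        · intro a b ha hb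
          rw [mul_add]
          exact V.add_mem _ _ ha hb
      have hle : Submodule.span (bigD k) ((E : Set (bigK k)) * (V : Set (bigK k))) ≤
          ({ carrier := {t | y⁻¹ * t ∈ V}
             add_mem' := fun {a b} ha hb => by
               show y⁻¹ * (a + b) ∈ V
               rw [mul_add]
               exact V.add_mem _ _ ha hb
             zero_mem' := by
               show y⁻¹ * 0 ∈ V
               rw [mul_zero]; exact V.zero_mem
             smul_mem' := by
               intro d t ht
               rw [Set.mem_setOf_eq]
               rw [Algebra.smul_def, mul_left_comm]
               exact V.mul_mem _ _ (hVd d) ht } : Submodule (bigD k) (bigK k)) := by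
        rw [Submodule.span_le]
        rintro _ ⟨e, he, u, hu, rfl⟩
        show y⁻¹ * (e * u) ∈ V
        rw [← mul_assoc]
        exact V.mul_mem _ _ (hEJ e he) hu
      exact hle (hz _ ⟨V, hVd, rfl⟩)
    -- y⁻¹ * z is in the image of D
    have hrange : y⁻¹ * z ∈ Set.range (algebraMap (bigD k) (bigK k)) := by
      by_contra hc
      haveI : IsFractionRing (bigD k) (bigK k) := by
        have e : @algebraMap (bigD k) (bigK k) _ _ _ =
            @algebraMap (bigD k) (bigK k) _ _ OreLocalization.instAlgebra := by
          apply IsLocalization.ringHom_ext (bigN k).primeCompl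
          exact RingHom.ext fun x => by simp [RingHom.algebraMap_toAlgebra]; rfl
        have h0 : @IsFractionRing (bigD k) _ (bigK k) _ OreLocalization.instAlgebra :=
          Localization.isLocalization
        convert h0 using 1
        exact Algebra.algebra_ext _ _ (fun r => congrArg (· r) e)
      obtain ⟨V₁, hV₁d, hV₁n⟩ := aux_exists (R := bigD k) hc
      exact hV₁n (hw V₁ hV₁d)
    obtain ⟨d₀, hd₀⟩ := hrange
    have hz_eq : z = y * algebraMap (bigD k) (bigK k) d₀ := by
      rw [hd₀]
      field_simp
    have hd₀M : d₀ ∈ bigM k := by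
      rw [bigM, IsLocalRing.mem_maximalIdeal, mem_nonunits_iff]
      intro hu
      obtain ⟨u, rfl⟩ := hu
      have hy_eq : y = z * algebraMap (bigD k) (bigK k) ↑u⁻¹ := by
        rw [hz_eq, mul_assoc, ← _root_.map_mul]
        simp
      have hle : v y ≤ v z := by
        rw [hy_eq, v.map_mul]
        calc v z * v (algebraMap (bigD k) (bigK k) ↑u⁻¹) ≤ v z * 1 :=
              mul_le_mul_right (hval_le _) _
          _ = v z := mul_one _
      exact absurd hzval (not_lt.mpr hle)
    rw [hz_eq, hE]
    refine Submodule.mul_mem_mul (Submodule.mem_span_singleton_self y) ?_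
    rw [bigMF] at *
    exact mem_coe.mpr (mem_coeIdeal_of_mem _ hd₀M)
  · -- easy direction
    refine le_sInf ?_
    rintro J ⟨V, hVd, rfl⟩
    intro e he
    exact Submodule.subset_span ⟨e, he, 1, V.one_mem, mul_one e⟩
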